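/- Let m, k, h, d be integers with d ≥ 1, 0 ≤ h ≤ k−1 and k ≤ m, and let L_1, L_2 ⊆ ℂ^{m+1} be ℂ-linear subspaces with dim L_1 = dim L_2 = k+1 and dim(L_1 ∩ L_2) = h+1. Then the ℂ-vector subspace { g ∈ S_d : g vanishes identically on L_1 and on L_2 } of the space S_d of homogeneous polynomials of degree d in ℂ[x_0, …, x_m] has dimension binom(d + m, m) − 2·binom(d + k, k) + binom(d + h, h). -/

import Mathlib

open MvPolynomial Finset

set_option maxHeartbeats 1000000
set_option synthInstance.maxHeartbeats 200000

noncomputable section Stmt13Aux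

namespace Stmt13

variable {n : ℕ}

/-- The coordinate subspace spanned by the standard basis vectors indexed by `A`. -/
def coordSub (A : Finset (Fin n)) : Submodule ℂ (Fin n → ℂ) :=
  Submodule.span ℂ ((fun i => Pi.single i (1 : ℂ)) '' ↑A)

lemma mem_coordSub {A : Finset (Fin n)} {v : Fin n → ℂ} :
    v ∈ coordSub A ↔ ∀ i ∉ A, v i = 0 := by
  constructor
  · intro hv
    have hle : coordSub A ≤ Submodule.pi ((↑A : Set (Fin n))ᶜ) (fun _ => (⊥ : Submodule ℂ ℂ)) := by
      rw [coordSub, Submodule.span_le]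
      rintro x ⟨i, hi, rfl⟩ j hj
      simp only [Set.mem_compl_iff, Finset.mem_coe] at hj
      have : j ≠ i := fun hji => hj (hji ▸ hi)
      simp [Pi.single_eq_of_ne this]
    intro i hi
    simpa using hle hv i (by simpa using hi)
  · intro hv
    have hsum : v = ∑ i ∈ A, v i • (Pi.single i (1 : ℂ) : Fin n → ℂ) := by
      funext j
      rw [Finset.sum_apply]
      by_cases hj : j ∈ A
      · rw [Finset.sum_eq_single j]
        · simp
        · intro b _ hbj
          simp [Pi.single_eq_of_ne (Ne.symm hbj)]
        · intro hcontra; exact absurd hj hcontra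
      · rw [hv j hj]
        symm
        apply Finset.sum_eq_zero
        intro b hb
        have : j ≠ b := fun hjb => hj (hjb ▸ hb)
        simp [Pi.single_eq_of_ne this]
    rw [hsum]
    exact Submodule.sum_mem _ fun i hi =>
      Submodule.smul_mem _ _ (Submodule.subset_span ⟨i, hi, rfl⟩)

lemma aeval_eq_eval (v : Fin n → ℂ) (g : MvPolynomial (Fin n) ℂ) :
    aeval (R := ℂ) v g = eval v g := rfl

/-- Set variables outside `A` to zero. -/
def proj (A : Finset (Fin n)) : MvPolynomial (Fin n) ℂ →ₐ[ℂ] MvPolynomial (Fin n) ℂ :=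
  aeval (fun i => if i ∈ A then X i else 0)

lemma proj_monomial (A : Finset (Fin n)) (α : Fin n →₀ ℕ) (c : ℂ) :
    proj A (monomial α c) = if α.support ⊆ A then monomial α c else 0 := by
  rw [proj, aeval_monomial]
  split_ifs with hs
  · rw [monomial_eq]
    congr 1
    apply Finsupp.prod_congr
    intro i hi
    rw [if_pos (hs hi)]
  · obtain ⟨i, hi, hiA⟩ := Finset.not_subset.1 hs
    apply mul_eq_zero_of_right
    apply Finset.prod_eq_zero hi
    simp only [if_neg hiA]
    exact zero_pow (Finsupp.mem_support_iff.1 hi)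

lemma coeff_proj {A : Finset (Fin n)} {α : Fin n →₀ ℕ} (hα : α.support ⊆ A)
    (g : MvPolynomial (Fin n) ℂ) :
    coeff α (proj A g) = coeff α g := by
  induction g using MvPolynomial.induction_on' with
  | monomial β c =>
    rw [proj_monomial]
    split_ifs with hb
    · rfl
    · rw [coeff_zero, coeff_monomial, if_neg]
      rintro rfl; exact hb hα
  | add p q hp hq => rw [map_add, coeff_add, coeff_add, hp, hq]

lemma vanish_iff {A : Finset (Fin n)} {g : MvPolynomial (Fin n) ℂ} :
    (∀ v ∈ coordSub A, aeval (R := ℂ) v g = 0) ↔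
      ∀ α : Fin n →₀ ℕ, α.support ⊆ A → coeff α g = 0 := by
  constructor
  · intro hv α hα
    have hproj : proj A g = 0 := by
      apply MvPolynomial.funext
      intro x
      have h1 : eval x (proj A g) =
          aeval (R := ℂ) (fun i => if i ∈ A then x i else 0) g := by
        rw [← aeval_eq_eval, proj, ← AlgHom.comp_apply, comp_aeval]
        have hfun : (fun i => aeval (R := ℂ) x (if i ∈ A then X i else 0)) =
            (fun i => if i ∈ A then x i else 0) := by
          funext i
          by_cases hiA : i ∈ A <;> simp [hiA]
        rw [hfun]
      rw [h1, hv _ (mem_coordSub.2 (fun i hi => if_neg hi))]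
      simp
    rw [← coeff_proj hα g, hproj, coeff_zero]
  · intro hc v hvmem
    rw [aeval_eq_eval, eval_eq]
    apply Finset.sum_eq_zero
    intro α hαsup
    by_cases hα : α.support ⊆ A
    · rw [hc α hα, zero_mul]
    · obtain ⟨i, hi, hiA⟩ := Finset.not_subset.1 hα
      rw [Finset.prod_eq_zero hi, mul_zero]
      rw [mem_coordSub.1 hvmem i hiA, zero_pow (Finsupp.mem_support_iff.1 hi)]

/-- Substitution along a linear map. -/
def subst (E : (Fin n → ℂ) →ₗ[ℂ] (Fin n → ℂ)) :
    MvPolynomial (Fin n) ℂ →ₐ[ℂ] MvPolynomial (Fin n) ℂ :=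
  aeval (fun i => ∑ j, C (E (Pi.single j 1) i) * X j)

lemma aeval_subst (E : (Fin n → ℂ) →ₗ[ℂ] (Fin n → ℂ)) (v : Fin n → ℂ)
    (g : MvPolynomial (Fin n) ℂ) :
    aeval (R := ℂ) v (subst E g) = aeval (R := ℂ) (E v) g := by
  rw [subst, ← AlgHom.comp_apply, comp_aeval]
  have hv : v = ∑ j, (v j) • (Pi.single j (1 : ℂ) : Fin n → ℂ) := by
    funext t
    rw [Finset.sum_apply]
    rw [Finset.sum_eq_single t]
    · simp
    · intro b _ hbt
      simp [Pi.single_eq_of_ne (Ne.symm hbt)]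
    · simp
  have hfun : (fun i => aeval (R := ℂ) v (∑ j, C (E (Pi.single j 1) i) * X j)) = E v := by
    funext i
    conv_rhs => rw [hv]
    rw [map_sum, map_sum, Finset.sum_apply]
    apply Finset.sum_congr rfl
    intro j _
    simp [mul_comm]
  rw [hfun]

lemma subst_isHomogeneous {E : (Fin n → ℂ) →ₗ[ℂ] (Fin n → ℂ)} {d : ℕ}
    {g : MvPolynomial (Fin n) ℂ} (hg : g.IsHomogeneous d) :
    (subst E g).IsHomogeneous d := by
  have h1 : ∀ i, ((∑ j, C (E (Pi.single j 1) i) * X j : MvPolynomial (Fin n) ℂ)).IsHomogeneous 1 := by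
    intro i
    apply MvPolynomial.IsHomogeneous.sum
    intro j _
    exact ((isHomogeneous_X ℂ j).C_mul _)
  have := hg.aeval _ h1
  rw [one_mul] at this
  exact this

/-- Substitution along a linear equivalence, as a linear equivalence of polynomial rings. -/
def substEquiv (e : (Fin n → ℂ) ≃ₗ[ℂ] (Fin n → ℂ)) :
    MvPolynomial (Fin n) ℂ ≃ₗ[ℂ] MvPolynomial (Fin n) ℂ := by
  refine LinearEquiv.ofLinear (subst ((e.symm : (Fin n → ℂ) →ₗ[ℂ] (Fin n → ℂ)))).toLinearMap
    (subst ((e : (Fin n → ℂ) →ₗ[ℂ] (Fin n → ℂ)))).toLinearMap ?_ ?_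
  · apply LinearMap.ext; intro g
    simp only [LinearMap.comp_apply, AlgHom.toLinearMap_apply, LinearMap.id_apply]
    apply MvPolynomial.funext; intro x
    rw [← aeval_eq_eval, ← aeval_eq_eval, aeval_subst, aeval_subst]
    simp
  · apply LinearMap.ext; intro g
    simp only [LinearMap.comp_apply, AlgHom.toLinearMap_apply, LinearMap.id_apply]
    apply MvPolynomial.funext; intro x
    rw [← aeval_eq_eval, ← aeval_eq_eval, aeval_subst, aeval_subst]
    simp

lemma substEquiv_apply (e : (Fin n → ℂ) ≃ₗ[ℂ] (Fin n → ℂ)) (g : MvPolynomial (Fin n) ℂ) :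
    substEquiv e g = subst (e.symm : (Fin n → ℂ) →ₗ[ℂ] (Fin n → ℂ)) g := rfl

lemma substEquiv_symm_apply (e : (Fin n → ℂ) ≃ₗ[ℂ] (Fin n → ℂ)) (g : MvPolynomial (Fin n) ℂ) :
    (substEquiv e).symm g = subst (e : (Fin n → ℂ) →ₗ[ℂ] (Fin n → ℂ)) g := rfl

/-- Polynomials vanishing identically on `L`. -/
def vanishOn (L : Submodule ℂ (Fin n → ℂ)) : Submodule ℂ (MvPolynomial (Fin n) ℂ) :=
  ⨅ v ∈ L, LinearMap.ker (aeval (R := ℂ) v).toLinearMap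

lemma mem_vanishOn {L : Submodule ℂ (Fin n → ℂ)} {g : MvPolynomial (Fin n) ℂ} :
    g ∈ vanishOn L ↔ ∀ v ∈ L, aeval (R := ℂ) v g = 0 := by
  simp [vanishOn, Submodule.mem_iInf, LinearMap.mem_ker]

lemma map_substEquiv_vanishOn (e : (Fin n → ℂ) ≃ₗ[ℂ] (Fin n → ℂ))
    (U : Submodule ℂ (Fin n → ℂ)) :
    Submodule.map (substEquiv e : MvPolynomial (Fin n) ℂ →ₗ[ℂ] MvPolynomial (Fin n) ℂ)
      (vanishOn U) = vanishOn (U.map (e : (Fin n → ℂ) →ₗ[ℂ] (Fin n → ℂ))) := by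
  ext x
  rw [Submodule.mem_map]
  constructor
  · rintro ⟨g, hg, rfl⟩
    rw [mem_vanishOn]
    intro v hv
    obtain ⟨u, hu, rfl⟩ := Submodule.mem_map.1 hv
    show (aeval (R := ℂ) ((e : (Fin n → ℂ) →ₗ[ℂ] (Fin n → ℂ)) u))
      (subst (e.symm : (Fin n → ℂ) →ₗ[ℂ] (Fin n → ℂ)) g) = 0
    rw [aeval_subst]
    simpa using mem_vanishOn.1 hg u hu
  · intro hx
    refine ⟨(substEquiv e).symm x, ?_, by simp⟩
    rw [mem_vanishOn]
    intro u hu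
    rw [substEquiv_symm_apply, aeval_subst]
    exact mem_vanishOn.1 hx _ (Submodule.mem_map_of_mem hu)

lemma map_substEquiv_homog (e : (Fin n → ℂ) ≃ₗ[ℂ] (Fin n → ℂ)) (d : ℕ) :
    Submodule.map (substEquiv e : MvPolynomial (Fin n) ℂ →ₗ[ℂ] MvPolynomial (Fin n) ℂ)
      (homogeneousSubmodule (Fin n) ℂ d) = homogeneousSubmodule (Fin n) ℂ d := by
  apply le_antisymm
  · rintro x ⟨g, hg, rfl⟩
    exact subst_isHomogeneous hg
  · intro x hx
    refine ⟨(substEquiv e).symm x, ?_, by simp⟩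
    rw [substEquiv_symm_apply]
    exact subst_isHomogeneous hx

/-- The index set of good monomials. -/
def goodSet (A B : Finset (Fin n)) (d : ℕ) : Finset (Fin n →₀ ℕ) :=
  (Finset.finsuppAntidiag Finset.univ d).filter
    (fun α => ¬(α.support ⊆ A ∨ α.support ⊆ B))

lemma inter_eq_restrictSupport (A B : Finset (Fin n)) (d : ℕ) :
    homogeneousSubmodule (Fin n) ℂ d ⊓ vanishOn (coordSub A) ⊓ vanishOn (coordSub B)
      = restrictSupport ℂ (↑(goodSet A B d) : Set (Fin n →₀ ℕ)) := by
  ext x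
  simp only [Submodule.mem_inf, mem_homogeneousSubmodule]
  rw [restrictSupport, AddMonoidAlgebra.mem_supported]
  constructor
  · rintro ⟨⟨hhom, hA⟩, hB⟩ α hα
    refine Finset.mem_coe.2 ?_
    have hc : coeff α x ≠ 0 := MvPolynomial.mem_support_iff.1 (Finset.mem_coe.1 hα)
    rw [goodSet, Finset.mem_filter, Finset.mem_finsuppAntidiag']
    refine ⟨⟨?_, Finset.subset_univ _⟩, ?_⟩
    · rw [show (α.sum fun _ m => m) = Finsupp.weight 1 α from
        (Finsupp.degree_eq_weight_one (R := ℕ) (σ := Fin n) ▸ rfl)]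
      exact hhom hc
    · rintro (hsA | hsB)
      · exact hc ((mem_vanishOn.1 hA |> vanish_iff.1) α hsA)
      · exact hc ((mem_vanishOn.1 hB |> vanish_iff.1) α hsB)
  · intro hsupp
    have key : ∀ α : Fin n →₀ ℕ, coeff α x ≠ 0 →
        (α.sum (fun _ m => m) = d ∧ ¬(α.support ⊆ A ∨ α.support ⊆ B)) := by
      intro α hc
      have := Finset.mem_coe.1 (hsupp (Finset.mem_coe.2 (MvPolynomial.mem_support_iff.2 hc)))
      rw [goodSet, Finset.mem_filter, Finset.mem_finsuppAntidiag'] at this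
      exact ⟨this.1.1, this.2⟩
    refine ⟨⟨?_, ?_⟩, ?_⟩
    · intro α hc
      rw [show (Finsupp.weight 1 α : ℕ) = α.sum fun _ m => m from
        (Finsupp.degree_eq_weight_one (R := ℕ) (σ := Fin n) ▸ rfl)]
      exact (key α hc).1
    · rw [mem_vanishOn]
      apply vanish_iff.2
      intro α hsA
      by_contra hc
      exact ((key α hc).2) (Or.inl hsA)
    · rw [mem_vanishOn]
      apply vanish_iff.2
      intro α hsB
      by_contra hc
      exact ((key α hc).2) (Or.inr hsB)

lemma finrank_restrictSupport (s : Finset (Fin n →₀ ℕ)) :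
    Module.finrank ℂ
      (restrictSupport ℂ (↑s : Set (Fin n →₀ ℕ)) : Submodule ℂ (MvPolynomial (Fin n) ℂ)) =
      s.card := by
  rw [Module.finrank_eq_card_basis (basisRestrictSupport ℂ (↑s : Set (Fin n →₀ ℕ)))]
  simp

lemma sum_subtypeDomain_eq {s : Finset (Fin n)} {f : Fin n →₀ ℕ}
    (hf : ↑f.support ⊆ (↑s : Set (Fin n))) :
    (Finsupp.subtypeDomain (fun i => i ∈ (↑s : Set (Fin n))) f).sum (fun _ m => m)
      = f.sum (fun _ m => m) := by
  classical
  rw [Finsupp.sum, Finsupp.sum, Finsupp.support_subtypeDomain]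
  rw [show (fun (x : {i // i ∈ (↑s : Set (Fin n))}) =>
      (Finsupp.subtypeDomain (fun i => i ∈ (↑s : Set (Fin n))) f) x)
    = (fun x => f x.1) from funext fun x => Finsupp.subtypeDomain_apply]
  exact Finset.sum_subtype_of_mem _ (fun x hx => hf hx)

lemma card_finsuppAntidiag (s : Finset (Fin n)) (d : ℕ) :
    (Finset.finsuppAntidiag s d).card = (s.card + d - 1).choose d := by
  classical
  rw [← Fintype.card_coe]
  have E1 : {f : Fin n →₀ ℕ // f ∈ Finset.finsuppAntidiag s d} ≃
      {P : (↥(↑s : Set (Fin n)) →₀ ℕ) // P.sum (fun _ m => m) = d} := by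
    refine
      { toFun := fun f =>
          ⟨Finsupp.restrictSupportEquiv (↑s : Set (Fin n)) ℕ
            ⟨f.1, by
              have := (Finset.mem_finsuppAntidiag'.1 f.2).2
              exact fun a ha => this ha⟩, ?_⟩
        invFun := fun P =>
          ⟨((Finsupp.restrictSupportEquiv (↑s : Set (Fin n)) ℕ).symm P.1).1, ?_⟩
        left_inv := ?_
        right_inv := ?_ }
    · rw [show ((Finsupp.restrictSupportEquiv (↑s : Set (Fin n)) ℕ)
          ⟨f.1, fun a ha => (Finset.mem_finsuppAntidiag'.1 f.2).2 ha⟩)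
        = Finsupp.subtypeDomain (fun i => i ∈ (↑s : Set (Fin n))) f.1 from rfl]
      rw [sum_subtypeDomain_eq (fun a ha => (Finset.mem_finsuppAntidiag'.1 f.2).2 ha)]
      exact (Finset.mem_finsuppAntidiag'.1 f.2).1
    · rw [Finset.mem_finsuppAntidiag']
      have hsupp : ↑(((Finsupp.restrictSupportEquiv (↑s : Set (Fin n)) ℕ).symm P.1).1).support
          ⊆ (↑s : Set (Fin n)) :=
        ((Finsupp.restrictSupportEquiv (↑s : Set (Fin n)) ℕ).symm P.1).2
      refine ⟨?_, fun a ha => hsupp ha⟩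
      rw [← sum_subtypeDomain_eq hsupp]
      rw [show Finsupp.subtypeDomain (fun i => i ∈ (↑s : Set (Fin n)))
          (((Finsupp.restrictSupportEquiv (↑s : Set (Fin n)) ℕ).symm P.1).1)
        = (Finsupp.restrictSupportEquiv (↑s : Set (Fin n)) ℕ)
            ((Finsupp.restrictSupportEquiv (↑s : Set (Fin n)) ℕ).symm P.1) from rfl]
      rw [Equiv.apply_symm_apply]
      exact P.2
    · intro f
      apply Subtype.ext
      dsimp only
      exact congrArg Subtype.val
        ((Finsupp.restrictSupportEquiv (↑s : Set (Fin n)) ℕ).symm_apply_apply _)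
    · intro P
      apply Subtype.ext
      dsimp only
      have : (⟨((Finsupp.restrictSupportEquiv (↑s : Set (Fin n)) ℕ).symm P.1).1,
          fun a ha => ((Finsupp.restrictSupportEquiv (↑s : Set (Fin n)) ℕ).symm P.1).2 ha⟩
          : {f : Fin n →₀ ℕ // ↑f.support ⊆ (↑s : Set (Fin n))})
          = (Finsupp.restrictSupportEquiv (↑s : Set (Fin n)) ℕ).symm P.1 := Subtype.ext rfl
      rw [this]
      exact (Finsupp.restrictSupportEquiv (↑s : Set (Fin n)) ℕ).apply_symm_apply P.1
  rw [Fintype.card_congr (E1.trans (Sym.equivNatSum ↥(↑s : Set (Fin n)) d).symm)]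
  rw [Sym.card_sym_eq_multichoose, Nat.multichoose_eq]
  congr 1
  simp

lemma filter_subset_eq_antidiag (s : Finset (Fin n)) (d : ℕ) :
    (Finset.finsuppAntidiag (Finset.univ : Finset (Fin n)) d).filter
        (fun α => α.support ⊆ s)
      = Finset.finsuppAntidiag s d := by
  ext α
  rw [Finset.mem_filter, Finset.mem_finsuppAntidiag', Finset.mem_finsuppAntidiag']
  constructor
  · rintro ⟨⟨h1, -⟩, h2⟩; exact ⟨h1, h2⟩
  · rintro ⟨h1, h2⟩; exact ⟨⟨h1, Finset.subset_univ _⟩, h2⟩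

lemma card_goodSet_identity (A B : Finset (Fin n)) (d : ℕ) :
    (goodSet A B d).card
      + ((Finset.finsuppAntidiag A d).card + (Finset.finsuppAntidiag B d).card)
    = (Finset.finsuppAntidiag (Finset.univ : Finset (Fin n)) d).card
      + (Finset.finsuppAntidiag (A ∩ B) d).card := by
  classical
  set D := Finset.finsuppAntidiag (Finset.univ : Finset (Fin n)) d with hD
  have h2 : (D.filter (fun α => α.support ⊆ A ∨ α.support ⊆ B)).card
      + (D.filter (fun α => ¬(α.support ⊆ A ∨ α.support ⊆ B))).card = D.card :=
    Finset.card_filter_add_card_filter_not _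
  have hgood : goodSet A B d = D.filter (fun α => ¬(α.support ⊆ A ∨ α.support ⊆ B)) := rfl
  have hor : D.filter (fun α => α.support ⊆ A ∨ α.support ⊆ B)
      = D.filter (fun α => α.support ⊆ A) ∪ D.filter (fun α => α.support ⊆ B) :=
    Finset.filter_or _ _ _
  have hunion : (D.filter (fun α => α.support ⊆ A) ∪ D.filter (fun α => α.support ⊆ B)).card
      + (D.filter (fun α => α.support ⊆ A) ∩ D.filter (fun α => α.support ⊆ B)).card
      = (D.filter (fun α => α.support ⊆ A)).card + (D.filter (fun α => α.support ⊆ B)).card :=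
    Finset.card_union_add_card_inter _ _
  have hinter : D.filter (fun α => α.support ⊆ A) ∩ D.filter (fun α => α.support ⊆ B)
      = D.filter (fun α => α.support ⊆ A ∩ B) := by
    rw [← Finset.filter_and]
    apply Finset.filter_congr
    intro α _
    rw [Finset.subset_inter_iff]
  rw [hor] at h2
  rw [hinter] at hunion
  rw [hgood, filter_subset_eq_antidiag A d] at *
  rw [filter_subset_eq_antidiag B d, filter_subset_eq_antidiag (A ∩ B) d] at *
  omega

lemma span_coe_basis {S : Submodule ℂ (Fin n → ℂ)} {nn : ℕ} (b : Module.Basis (Fin nn) ℂ S) :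
    Submodule.span ℂ (Set.range (fun i => (b i : Fin n → ℂ))) = S := by
  have h1 : Set.range (fun i => (b i : Fin n → ℂ)) = S.subtype '' Set.range b := by
    rw [← Set.range_comp]; rfl
  rw [h1, Submodule.span_image, b.span_eq, Submodule.map_subtype_top]

lemma exists_adapted {m k h : ℕ} (hhk : h + 1 ≤ k) (hkm : k ≤ m)
    (L₁ L₂ : Submodule ℂ (Fin (m + 1) → ℂ))
    (hL₁ : Module.finrank ℂ L₁ = k + 1) (hL₂ : Module.finrank ℂ L₂ = k + 1)
    (hmeet : Module.finrank ℂ ↥(L₁ ⊓ L₂) = h + 1) :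
    ∃ (e : (Fin (m + 1) → ℂ) ≃ₗ[ℂ] (Fin (m + 1) → ℂ)) (A B : Finset (Fin (m + 1))),
      A.card = k + 1 ∧ B.card = k + 1 ∧ (A ∩ B).card = h + 1 ∧
      Submodule.map (e : (Fin (m + 1) → ℂ) →ₗ[ℂ] (Fin (m + 1) → ℂ)) (coordSub A) = L₁ ∧
      Submodule.map (e : (Fin (m + 1) → ℂ) →ₗ[ℂ] (Fin (m + 1) → ℂ)) (coordSub B) = L₂ := by
  classical
  set W : Submodule ℂ (Fin (m + 1) → ℂ) := L₁ ⊓ L₂ with hW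
  obtain ⟨Q₁, hQ₁⟩ := Submodule.exists_isCompl (Submodule.comap L₁.subtype W)
  obtain ⟨Q₂, hQ₂⟩ := Submodule.exists_isCompl (Submodule.comap L₂.subtype W)
  obtain ⟨C₃, hC₃⟩ := Submodule.exists_isCompl (L₁ ⊔ L₂)
  set C₁ : Submodule ℂ (Fin (m + 1) → ℂ) := Q₁.map L₁.subtype with hC₁def
  set C₂ : Submodule ℂ (Fin (m + 1) → ℂ) := Q₂.map L₂.subtype with hC₂def
  have hWL₁ : W ≤ L₁ := inf_le_left
  have hWL₂ : W ≤ L₂ := inf_le_right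
  have hsup₁ : W ⊔ C₁ = L₁ := by
    have := congrArg (Submodule.map L₁.subtype) hQ₁.sup_eq_top
    rwa [Submodule.map_sup, Submodule.map_comap_subtype, inf_of_le_right hWL₁,
      Submodule.map_subtype_top] at this
  have hsup₂ : W ⊔ C₂ = L₂ := by
    have := congrArg (Submodule.map L₂.subtype) hQ₂.sup_eq_top
    rwa [Submodule.map_sup, Submodule.map_comap_subtype, inf_of_le_right hWL₂,
      Submodule.map_subtype_top] at this
  have hV : Module.finrank ℂ (Fin (m + 1) → ℂ) = m + 1 := Module.finrank_fin_fun ℂ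
  -- finranks
  have hcomap₁ : Module.finrank ℂ (Submodule.comap L₁.subtype W) = h + 1 := by
    rw [(Submodule.comapSubtypeEquivOfLe hWL₁).finrank_eq]; exact hmeet
  have hcomap₂ : Module.finrank ℂ (Submodule.comap L₂.subtype W) = h + 1 := by
    rw [(Submodule.comapSubtypeEquivOfLe hWL₂).finrank_eq]; exact hmeet
  have hQ₁rank : Module.finrank ℂ (Submodule.comap L₁.subtype W) + Module.finrank ℂ Q₁
      = Module.finrank ℂ L₁ := Submodule.finrank_add_eq_of_isCompl hQ₁
  have hQ₂rank : Module.finrank ℂ (Submodule.comap L₂.subtype W) + Module.finrank ℂ Q₂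
      = Module.finrank ℂ L₂ := Submodule.finrank_add_eq_of_isCompl hQ₂
  have hC₁rank : Module.finrank ℂ C₁ = k - h := by
    rw [hC₁def, Submodule.finrank_map_subtype_eq]
    omega
  have hC₂rank : Module.finrank ℂ C₂ = k - h := by
    rw [hC₂def, Submodule.finrank_map_subtype_eq]
    omega
  have hsuprank : Module.finrank ℂ ↥(L₁ ⊔ L₂) + Module.finrank ℂ ↥(L₁ ⊓ L₂)
      = Module.finrank ℂ L₁ + Module.finrank ℂ L₂ :=
    Submodule.finrank_sup_add_finrank_inf_eq L₁ L₂
  have hsuple : Module.finrank ℂ ↥(L₁ ⊔ L₂) ≤ m + 1 := by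
    have := Submodule.finrank_le (L₁ ⊔ L₂)
    rwa [hV] at this
  rw [← hW] at hsuprank
  have hC₃sum : Module.finrank ℂ ↥(L₁ ⊔ L₂) + Module.finrank ℂ C₃
      = m + 1 := by rw [Submodule.finrank_add_eq_of_isCompl hC₃]; exact hV
  have h2k : 2 * k ≤ m + h := by omega
  have hC₃rank : Module.finrank ℂ C₃ = m + h - 2 * k := by omega
  -- bases
  let bW : Module.Basis (Fin (h + 1)) ℂ W := Module.finBasisOfFinrankEq ℂ W hmeet
  let b₁ : Module.Basis (Fin (k - h)) ℂ C₁ := Module.finBasisOfFinrankEq ℂ C₁ hC₁rank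
  let b₂ : Module.Basis (Fin (k - h)) ℂ C₂ := Module.finBasisOfFinrankEq ℂ C₂ hC₂rank
  let b₃ : Module.Basis (Fin (m + h - 2 * k)) ℂ C₃ := Module.finBasisOfFinrankEq ℂ C₃ hC₃rank
  let v : ((Fin (h + 1) ⊕ Fin (k - h)) ⊕ (Fin (k - h) ⊕ Fin (m + h - 2 * k)))
      → (Fin (m + 1) → ℂ) :=
    Sum.elim (Sum.elim (fun i => (bW i : Fin (m + 1) → ℂ)) (fun i => (b₁ i : Fin (m + 1) → ℂ)))
      (Sum.elim (fun i => (b₂ i : Fin (m + 1) → ℂ)) (fun i => (b₃ i : Fin (m + 1) → ℂ)))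
  have hC₂le : C₂ ≤ L₂ := Submodule.map_subtype_le _ _
  have hspanv : Submodule.span ℂ (Set.range v) = ⊤ := by
    rw [show Set.range v = _ ∪ _ from Set.Sum.elim_range _ _]
    rw [Submodule.span_union]
    rw [show Set.range (Sum.elim (fun i => (bW i : Fin (m + 1) → ℂ))
        (fun i => (b₁ i : Fin (m + 1) → ℂ))) = _ ∪ _ from Set.Sum.elim_range _ _]
    rw [show Set.range (Sum.elim (fun i => (b₂ i : Fin (m + 1) → ℂ))
        (fun i => (b₃ i : Fin (m + 1) → ℂ))) = _ ∪ _ from Set.Sum.elim_range _ _]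
    rw [Submodule.span_union, Submodule.span_union]
    rw [span_coe_basis bW, span_coe_basis b₁, span_coe_basis b₂, span_coe_basis b₃]
    rw [hsup₁, ← sup_assoc]
    have h12 : L₁ ⊔ C₂ = L₁ ⊔ L₂ := by
      apply le_antisymm
      · exact sup_le_sup_left hC₂le _
      · rw [← hsup₂, ← sup_assoc, sup_of_le_left hWL₁]
    rw [h12]
    exact hC₃.sup_eq_top
  have hcardι : Fintype.card ((Fin (h + 1) ⊕ Fin (k - h)) ⊕ (Fin (k - h) ⊕ Fin (m + h - 2 * k)))
      = m + 1 := by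
    simp only [Fintype.card_sum, Fintype.card_fin]
    omega
  let b := basisOfTopLeSpanOfCardEqFinrank v (le_of_eq hspanv.symm) (by rw [hcardι, hV])
  have hb : ⇑b = v := coe_basisOfTopLeSpanOfCardEqFinrank _ _ _
  let σe : Fin (m + 1) ≃ ((Fin (h + 1) ⊕ Fin (k - h)) ⊕ (Fin (k - h) ⊕ Fin (m + h - 2 * k))) :=
    Fintype.equivOfCardEq (by rw [hcardι, Fintype.card_fin])
  let e : (Fin (m + 1) → ℂ) ≃ₗ[ℂ] (Fin (m + 1) → ℂ) := (Pi.basisFun ℂ (Fin (m + 1))).equiv b σe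
  have he : ∀ i, e (Pi.single i (1 : ℂ)) = v (σe i) := by
    intro i
    rw [← Pi.basisFun_apply ℂ (Fin (m + 1)) i, Module.Basis.equiv_apply, hb]
  -- index sets
  set A : Finset (Fin (m + 1)) :=
    Finset.image (fun x : Fin (h + 1) ⊕ Fin (k - h) => σe.symm (Sum.inl x)) Finset.univ with hAdef
  set B : Finset (Fin (m + 1)) :=
    Finset.image (fun x : Fin (h + 1) ⊕ Fin (k - h) =>
      σe.symm (Sum.elim (fun y => Sum.inl (Sum.inl y)) (fun y => Sum.inr (Sum.inl y)) x))
      Finset.univ with hBdef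
  have hinjA : Function.Injective
      (fun x : Fin (h + 1) ⊕ Fin (k - h) => σe.symm (Sum.inl x)) :=
    fun x y hxy => Sum.inl_injective (σe.symm.injective hxy)
  have hinjB0 : Function.Injective (Sum.elim
      (fun y : Fin (h + 1) => (Sum.inl (Sum.inl y) :
        (Fin (h + 1) ⊕ Fin (k - h)) ⊕ (Fin (k - h) ⊕ Fin (m + h - 2 * k))))
      (fun y : Fin (k - h) => Sum.inr (Sum.inl y))) := by
    rintro (y | y) (z | z) hyz <;> simp_all
  have hinjB : Function.Injective (fun x : Fin (h + 1) ⊕ Fin (k - h) =>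
      σe.symm (Sum.elim (fun y => Sum.inl (Sum.inl y)) (fun y => Sum.inr (Sum.inl y)) x)) :=
    fun x y hxy => hinjB0 (σe.symm.injective hxy)
  have hAcard : A.card = k + 1 := by
    rw [hAdef, Finset.card_image_of_injective _ hinjA, Finset.card_univ, Fintype.card_sum,
      Fintype.card_fin, Fintype.card_fin]
    omega
  have hBcard : B.card = k + 1 := by
    rw [hBdef, Finset.card_image_of_injective _ hinjB, Finset.card_univ, Fintype.card_sum,
      Fintype.card_fin, Fintype.card_fin]
    omega
  have hABinter : A ∩ B =
      Finset.image (fun y : Fin (h + 1) => σe.symm (Sum.inl (Sum.inl y))) Finset.univ := by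
    ext i
    constructor
    · intro hi
      obtain ⟨hiA, hiB⟩ := Finset.mem_inter.1 hi
      obtain ⟨x, -, hx⟩ := Finset.mem_image.1 hiA
      obtain ⟨y, -, hy⟩ := Finset.mem_image.1 hiB
      rw [← hy] at hx
      have hxy := σe.symm.injective hx
      rcases y with y | y
      · simp only [Sum.elim_inl] at hxy
        rw [Finset.mem_image]
        exact ⟨y, Finset.mem_univ _, by rw [← hy]; rfl⟩
      · simp only [Sum.elim_inr] at hxy
        exact absurd hxy (by simp)
    · intro hi
      obtain ⟨y, -, hy⟩ := Finset.mem_image.1 hi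
      rw [Finset.mem_inter]
      constructor
      · rw [hAdef, Finset.mem_image]
        exact ⟨Sum.inl y, Finset.mem_univ _, hy⟩
      · rw [hBdef, Finset.mem_image]
        exact ⟨Sum.inl y, Finset.mem_univ _, hy⟩
  have hABcard : (A ∩ B).card = h + 1 := by
    rw [hABinter, Finset.card_image_of_injective _
      (fun x y hxy => Sum.inl_injective (Sum.inl_injective (σe.symm.injective hxy))),
      Finset.card_univ, Fintype.card_fin]
  have hmapA : Submodule.map (e : (Fin (m + 1) → ℂ) →ₗ[ℂ] (Fin (m + 1) → ℂ)) (coordSub A)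
      = L₁ := by
    rw [coordSub, Submodule.map_span]
    have himg : (⇑(e : (Fin (m + 1) → ℂ) →ₗ[ℂ] (Fin (m + 1) → ℂ))) ''
        ((fun i => Pi.single i (1 : ℂ)) '' ↑A)
        = Set.range (Sum.elim (fun i => (bW i : Fin (m + 1) → ℂ))
            (fun i => (b₁ i : Fin (m + 1) → ℂ))) := by
      rw [hAdef, Finset.coe_image, Finset.coe_univ, Set.image_univ]
      rw [← Set.range_comp, ← Set.range_comp]
      have hfun : (⇑(e : (Fin (m + 1) → ℂ) →ₗ[ℂ] (Fin (m + 1) → ℂ)) ∘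
          ((fun i => Pi.single i (1 : ℂ)) ∘ fun x : Fin (h + 1) ⊕ Fin (k - h) =>
            σe.symm (Sum.inl x)))
          = Sum.elim (fun i => (bW i : Fin (m + 1) → ℂ)) (fun i => (b₁ i : Fin (m + 1) → ℂ)) := by
        funext x
        show e (Pi.single (σe.symm (Sum.inl x)) 1) = _
        rw [he, Equiv.apply_symm_apply]
        cases x <;> rfl
      rw [hfun]
    rw [himg, show Set.range (Sum.elim (fun i => (bW i : Fin (m + 1) → ℂ))
        (fun i => (b₁ i : Fin (m + 1) → ℂ))) = _ ∪ _ from Set.Sum.elim_range _ _,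
      Submodule.span_union, span_coe_basis bW, span_coe_basis b₁, hsup₁]
  have hmapB : Submodule.map (e : (Fin (m + 1) → ℂ) →ₗ[ℂ] (Fin (m + 1) → ℂ)) (coordSub B)
      = L₂ := by
    rw [coordSub, Submodule.map_span]
    have himg : (⇑(e : (Fin (m + 1) → ℂ) →ₗ[ℂ] (Fin (m + 1) → ℂ))) ''
        ((fun i => Pi.single i (1 : ℂ)) '' ↑B)
        = Set.range (Sum.elim (fun i => (bW i : Fin (m + 1) → ℂ))
            (fun i => (b₂ i : Fin (m + 1) → ℂ))) := by
      rw [hBdef, Finset.coe_image, Finset.coe_univ, Set.image_univ]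
      rw [← Set.range_comp, ← Set.range_comp]
      have hfun : (⇑(e : (Fin (m + 1) → ℂ) →ₗ[ℂ] (Fin (m + 1) → ℂ)) ∘
          ((fun i => Pi.single i (1 : ℂ)) ∘ fun x : Fin (h + 1) ⊕ Fin (k - h) =>
            σe.symm (Sum.elim (fun y => Sum.inl (Sum.inl y)) (fun y => Sum.inr (Sum.inl y)) x)))
          = Sum.elim (fun i => (bW i : Fin (m + 1) → ℂ)) (fun i => (b₂ i : Fin (m + 1) → ℂ)) := by
        funext x
        show e (Pi.single (σe.symm
          (Sum.elim (fun y => Sum.inl (Sum.inl y)) (fun y => Sum.inr (Sum.inl y)) x)) 1) = _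
        rw [he, Equiv.apply_symm_apply]
        cases x <;> rfl
      rw [hfun]
    rw [himg, show Set.range (Sum.elim (fun i => (bW i : Fin (m + 1) → ℂ))
        (fun i => (b₂ i : Fin (m + 1) → ℂ))) = _ ∪ _ from Set.Sum.elim_range _ _,
      Submodule.span_union, span_coe_basis bW, span_coe_basis b₂, hsup₂]
  exact ⟨e, A, B, hAcard, hBcard, hABcard, hmapA, hmapB⟩

end Stmt13

end Stmt13Aux

open Stmt13 in
/-- Claim 2.4 of the paper. The space of degree-`d` forms on `ℙ^m`
vanishing on two fixed `k`-dimensional linear subspaces meeting along an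
`h`-dimensional linear subspace has dimension `C(d+m,m) - 2·C(d+k,k) + C(d+h,h)`. -/
theorem stmt_13 (m k h d : ℕ) (hd : 1 ≤ d) (hhk : h + 1 ≤ k) (hkm : k ≤ m)
    (L₁ L₂ : Submodule ℂ (Fin (m + 1) → ℂ))
    (hL₁ : Module.finrank ℂ L₁ = k + 1) (hL₂ : Module.finrank ℂ L₂ = k + 1)
    (hmeet : Module.finrank ℂ ↥(L₁ ⊓ L₂) = h + 1) :
    (Module.finrank ℂ
        ↥(homogeneousSubmodule (Fin (m + 1)) ℂ d ⊓
          (⨅ v ∈ L₁, LinearMap.ker (aeval (R := ℂ) v).toLinearMap) ⊓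
          (⨅ v ∈ L₂, LinearMap.ker (aeval (R := ℂ) v).toLinearMap)) : ℤ) =
      ((d + m).choose m : ℤ) - 2 * ((d + k).choose k : ℤ) + ((d + h).choose h : ℤ) := by
  classical
  obtain ⟨e, A, B, hA, hB, hAB, hmA, hmB⟩ :=
    Stmt13.exists_adapted hhk hkm L₁ L₂ hL₁ hL₂ hmeet
  have hdef₁ : (⨅ v ∈ L₁, LinearMap.ker (aeval (R := ℂ) v).toLinearMap) = vanishOn L₁ := rfl
  have hdef₂ : (⨅ v ∈ L₂, LinearMap.ker (aeval (R := ℂ) v).toLinearMap) = vanishOn L₂ := rfl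
  rw [hdef₁, hdef₂]
  have hinj : Function.Injective
      ⇑((substEquiv e) : MvPolynomial (Fin (m + 1)) ℂ →ₗ[ℂ] MvPolynomial (Fin (m + 1)) ℂ) :=
    (substEquiv e).injective
  have hML : homogeneousSubmodule (Fin (m + 1)) ℂ d ⊓ vanishOn L₁ ⊓ vanishOn L₂
      = Submodule.map
          ((substEquiv e) : MvPolynomial (Fin (m + 1)) ℂ →ₗ[ℂ] MvPolynomial (Fin (m + 1)) ℂ)
          (homogeneousSubmodule (Fin (m + 1)) ℂ d ⊓ vanishOn (coordSub A)
            ⊓ vanishOn (coordSub B)) := by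
    rw [Submodule.map_inf _ hinj, Submodule.map_inf _ hinj]
    rw [map_substEquiv_homog, map_substEquiv_vanishOn, map_substEquiv_vanishOn, hmA, hmB]
  rw [hML, LinearEquiv.finrank_map_eq, inter_eq_restrictSupport, finrank_restrictSupport]
  -- now counting
  have hid := card_goodSet_identity A B d
  rw [card_finsuppAntidiag, card_finsuppAntidiag, card_finsuppAntidiag, card_finsuppAntidiag, hA, hB, hAB,
    Finset.card_univ, Fintype.card_fin] at hid
  have e1 : (k + 1 + d - 1).choose d = (d + k).choose k := by
    have h1 : k + 1 + d - 1 = d + k := by omega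
    rw [h1]
    have := Nat.choose_symm (by omega : k ≤ d + k)
    rw [show d + k - k = d from by omega] at this
    exact this
  have e2 : (m + 1 + d - 1).choose d = (d + m).choose m := by
    have h1 : m + 1 + d - 1 = d + m := by omega
    rw [h1]
    have := Nat.choose_symm (by omega : m ≤ d + m)
    rw [show d + m - m = d from by omega] at this
    exact this
  have e3 : (h + 1 + d - 1).choose d = (d + h).choose h := by
    have h1 : h + 1 + d - 1 = d + h := by omega
    rw [h1]
    have := Nat.choose_symm (by omega : h ≤ d + h)
    rw [show d + h - h = d from by omega] at this
    exact this
  rw [e1, e2, e3] at hid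
  omega
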